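/- (Corollary 4.2: large-intensity limit of the density.) Fix t > 0 and x with min(v₂t, 0) < x < v₁t, x ≠ 0 and x ≠ v₂t. Then for each j ∈ {1,2}, the reset density p̃(x,t|v_j), regarded as a function of the velocity-change intensity λ, satisfies lim_{λ→+∞} p̃(x,t|v_j) = 1_{v₂t<x<v₁t}·e^{−ξt}/((v₁−v₂)t) + I(x,t)·(ξ/(v₁−v₂))·Γ^ξ(x,t), where Γ^ξ(x,t) = Γ(0, M_x·ξ, t·ξ) if v₂ < 0 < v₁ and Γ^ξ(x,t) = Γ(0, (x/v₁)ξ, m_{x,t}·ξ) if 0 < v₂ < v₁. In particular the limit does not depend on j. -/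

import Mathlib

open MeasureTheory Real Filter Topology Set

noncomputable section

namespace TelegraphReset

open Classical in
/-- Real-valued indicator of a proposition. -/
def ind (P : Prop) : ℝ := if P then 1 else 0

/-- Generalized incomplete gamma function `Γ(0, z₀, z₁) = ∫_{z₀}^{z₁} u⁻¹ e^{-u} du`. -/
def iGamma (z₀ z₁ : ℝ) : ℝ := ∫ u in z₀..z₁, u⁻¹ * Real.exp (-u)

/-- Upper incomplete gamma function `Γ(0, a) = ∫_a^∞ u⁻¹ e^{-u} du`. -/
def uGamma (a : ℝ) : ℝ := ∫ u in Set.Ioi a, u⁻¹ * Real.exp (-u)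

/-- `τ(x,t) = (x - v₂ t)/(v₁ - v₂)`. -/
def tauF (v₁ v₂ x t : ℝ) : ℝ := (x - v₂ * t) / (v₁ - v₂)

/-- The two velocities, indexed by `1` and `2`. -/
def vel (v₁ v₂ : ℝ) : ℕ → ℝ := fun n => if n = 1 then v₁ else v₂

/-- `Γ_λ^ξ(x,t)`, defined piecewise according to the sign of `v₂`. -/
def GamL (v₁ v₂ lam xi x t : ℝ) : ℝ :=
  if v₂ < 0 then iGamma ((max (x / v₁) (x / v₂) + 1 / lam) * xi) ((t + 1 / lam) * xi)
  else iGamma ((x / v₁ + 1 / lam) * xi) ((min (x / v₂) t + 1 / lam) * xi)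

/-- `Θ_λ^ξ(x,t)`, defined piecewise according to the sign of `v₂`. -/
def Theta (v₁ v₂ lam xi x t : ℝ) : ℝ :=
  if v₂ < 0 then
    Real.exp (-(xi * max (x / v₁) (x / v₂))) / (1 + lam * max (x / v₁) (x / v₂))
      - Real.exp (-(xi * t)) / (1 + lam * t)
  else
    Real.exp (-(xi * (x / v₁))) / (1 + lam * (x / v₁))
      - Real.exp (-(xi * min (x / v₂) t)) / (1 + lam * min (x / v₂) t)

/-- Closed-form sub-density `P_{j,j}(x,t)` (Eq. (21)). -/
def Pss (v₁ v₂ lam xi : ℝ) (j : ℕ) (x t : ℝ) : ℝ :=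
  ind (v₂ * t < x ∧ x < v₁ * t) * Real.exp (-(xi * t)) * lam ^ 2 *
      tauF v₁ v₂ x t ^ (2 - j) * (t - tauF v₁ v₂ x t) ^ (j - 1) /
      ((v₁ - v₂) * (1 + lam * t) ^ 2)
  + Real.sign (vel v₁ v₂ j) * ind (0 < x / vel v₁ v₂ j ∧ x / vel v₁ v₂ j < t) * xi *
      Real.exp (-(xi * (x / vel v₁ v₂ j))) / (vel v₁ v₂ j + lam * x)
  + ind (min (v₂ * t) 0 < x ∧ x < v₁ * t) *
      ((-1 : ℝ) ^ (3 - j) * (xi * (vel v₁ v₂ (3 - j) + lam * x) / (v₁ - v₂) ^ 2) *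
          Theta v₁ v₂ lam xi x t
        + (-1 : ℝ) ^ j * (xi * Real.exp (xi / lam) / (v₁ - v₂) ^ 2) *
            (vel v₁ v₂ (3 - j) * (lam + xi) / lam + x * xi) * GamL v₁ v₂ lam xi x t)

/-- Closed-form sub-density `P_{3-j,j}(x,t)` (Eq. (22)). -/
def Pos (v₁ v₂ lam xi : ℝ) (j : ℕ) (x t : ℝ) : ℝ :=
  ind (v₂ * t < x ∧ x < v₁ * t) * Real.exp (-(xi * t)) * lam *
      (1 + lam * tauF v₁ v₂ x t ^ (j - 1) * (t - tauF v₁ v₂ x t) ^ (2 - j)) /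
      ((v₁ - v₂) * (1 + lam * t) ^ 2)
  + ind (min (v₂ * t) 0 < x ∧ x < v₁ * t) *
      ((-1 : ℝ) ^ j * (xi * (vel v₁ v₂ (3 - j) + lam * x) / (v₁ - v₂) ^ 2) *
          Theta v₁ v₂ lam xi x t
        + (-1 : ℝ) ^ (3 - j) * (xi * Real.exp (xi / lam) / (v₁ - v₂) ^ 2) *
            (vel v₁ v₂ j * (lam + xi) / lam + x * xi
              + (-1 : ℝ) ^ j * xi * (v₁ - v₂) / lam) * GamL v₁ v₂ lam xi x t)

/-- Closed-form reset density `p̃(x,t|v_j)` (Eq. (37)). -/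
def pTil (v₁ v₂ lam xi : ℝ) (j : ℕ) (x t : ℝ) : ℝ :=
  Real.sign (vel v₁ v₂ j) * ind (0 < x / vel v₁ v₂ j ∧ x / vel v₁ v₂ j < t) * xi *
      Real.exp (-(xi * (x / vel v₁ v₂ j))) / (vel v₁ v₂ j + lam * x)
  + ind (v₂ * t < x ∧ x < v₁ * t) * lam * Real.exp (-(xi * t)) /
      ((v₁ - v₂) * (1 + lam * t))
  + ind (min (v₂ * t) 0 < x ∧ x < v₁ * t) *
      (xi * Real.exp (xi / lam) / (v₁ - v₂)) * GamL v₁ v₂ lam xi x t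

/-- First moment `E_j[X̃(t)]` (Eq. (54)). -/
def Emom (v₁ v₂ lam xi : ℝ) (j : ℕ) (t : ℝ) : ℝ :=
  (1 - Real.exp (-(xi * t))) *
      ((v₁ + v₂) / (2 * xi) + (vel v₁ v₂ j - vel v₁ v₂ (3 - j)) / (2 * lam))
  - xi * Real.exp (xi / lam) * (vel v₁ v₂ j - vel v₁ v₂ (3 - j)) / (2 * lam ^ 2) *
      iGamma (xi / lam) (xi / lam * (1 + lam * t))
  + t * Real.exp (-(xi * t)) * (vel v₁ v₂ j - vel v₁ v₂ (3 - j)) / (2 * (1 + lam * t))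

/-- Second moment `E_j[X̃²(t)]` (Eq. (55)). -/
def Smom (v₁ v₂ lam xi : ℝ) (j : ℕ) (t : ℝ) : ℝ :=
  (1 - Real.exp (-(xi * t))) *
      (2 * (v₁ ^ 2 + v₁ * v₂ + v₂ ^ 2) / (3 * xi ^ 2)
        + (2 * vel v₁ v₂ j ^ 2 - v₁ * v₂ - vel v₁ v₂ (3 - j) ^ 2) / (3 * lam) *
            (1 / xi - 1 / lam))
  - t * Real.exp (-(xi * t)) *
      (2 * (v₁ ^ 2 + v₁ * v₂ + v₂ ^ 2) / (3 * xi)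
        + (2 * vel v₁ v₂ j ^ 2 - v₁ * v₂ - vel v₁ v₂ (3 - j) ^ 2) /
            (3 * lam * (1 + lam * t)))
  + xi * Real.exp (xi / lam) *
      (2 * vel v₁ v₂ j ^ 2 - v₁ * v₂ - vel v₁ v₂ (3 - j) ^ 2) / (3 * lam ^ 3) *
      iGamma (xi / lam) (xi / lam * (1 + lam * t))

/-- First moment of the reset-free process. -/
def m1 (v₁ v₂ lam : ℝ) (j : ℕ) (t : ℝ) : ℝ :=
  (v₁ + v₂) * t / 2 + (vel v₁ v₂ j - vel v₁ v₂ (3 - j)) * t / (2 * (1 + lam * t))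

/-- Second moment of the reset-free process (Eq. (63)). -/
def m2 (v₁ v₂ lam : ℝ) (j : ℕ) (t : ℝ) : ℝ :=
  t ^ 2 * (3 * vel v₁ v₂ j ^ 2 + lam * t * (v₁ ^ 2 + v₁ * v₂ + v₂ ^ 2)) /
    (3 * (1 + lam * t))



private lemma fcont : ContinuousOn (fun u : ℝ => u⁻¹ * Real.exp (-u)) (Set.Ioi 0) := by
  apply ContinuousOn.mul
  · exact ContinuousOn.inv₀ continuousOn_id (fun u hu => ne_of_gt hu)
  · exact (Real.continuous_exp.comp continuous_neg).continuousOn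

private lemma iGamma_lim (xi a b : ℝ) (hxi : 0 < xi) (ha : 0 < a) (hb : 0 < b) :
    Tendsto (fun lam : ℝ => iGamma ((a + 1/lam) * xi) ((b + 1/lam) * xi)) atTop
      (𝓝 (iGamma (a * xi) (b * xi))) := by
  set f : ℝ → ℝ := fun u => u⁻¹ * Real.exp (-u) with hf
  set k : ℝ := min (a * xi) (b * xi) with hkdef
  have hk : 0 < k := lt_min (mul_pos ha hxi) (mul_pos hb hxi)
  have hint : ∀ y : ℝ, 0 < y → IntervalIntegrable f volume k y := by
    intro y hy
    refine (fcont.mono ?_).intervalIntegrable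
    intro u hu
    exact lt_of_lt_of_le (lt_min hk hy) hu.1
  set g : ℝ → ℝ := fun y => ∫ u in k..y, f u with hg
  have hgc : ∀ y : ℝ, 0 < y → ContinuousAt g y := by
    intro y hy
    exact (intervalIntegral.integral_hasDerivAt_right (hint y hy)
      (fcont.stronglyMeasurableAtFilter isOpen_Ioi y hy)
      (fcont.continuousAt (isOpen_Ioi.mem_nhds hy))).continuousAt
  have h0 : Tendsto (fun lam : ℝ => (1 : ℝ)/lam) atTop (𝓝 0) := by
    simpa only [one_div] using tendsto_inv_atTop_zero (𝕜 := ℝ)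
  have hca : Tendsto (fun lam : ℝ => (a + 1/lam) * xi) atTop (𝓝 (a * xi)) := by
    have h1 : Tendsto (fun lam : ℝ => (a + 1/lam)) atTop (𝓝 (a + 0)) :=
      tendsto_const_nhds.add h0
    simpa using h1.mul_const xi
  have hcb : Tendsto (fun lam : ℝ => (b + 1/lam) * xi) atTop (𝓝 (b * xi)) := by
    have h1 : Tendsto (fun lam : ℝ => (b + 1/lam)) atTop (𝓝 (b + 0)) :=
      tendsto_const_nhds.add h0
    simpa using h1.mul_const xi
  have key : Tendsto (fun lam : ℝ => g ((b + 1/lam) * xi) - g ((a + 1/lam) * xi)) atTop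
      (𝓝 (g (b * xi) - g (a * xi))) :=
    (((hgc (b * xi) (mul_pos hb hxi)).tendsto.comp hcb).sub
      ((hgc (a * xi) (mul_pos ha hxi)).tendsto.comp hca))
  have hval : g (b * xi) - g (a * xi) = iGamma (a * xi) (b * xi) :=
    intervalIntegral.integral_interval_sub_left (hint _ (mul_pos hb hxi))
      (hint _ (mul_pos ha hxi))
  rw [← hval]
  refine key.congr' ?_
  filter_upwards [eventually_gt_atTop (0 : ℝ)] with lam hlam
  have h1 : 0 < (a + 1/lam) * xi := mul_pos (by positivity) hxi
  have h2 : 0 < (b + 1/lam) * xi := mul_pos (by positivity) hxi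
  exact intervalIntegral.integral_interval_sub_left (hint _ h2) (hint _ h1)

/-- Corollary 4.2: large-intensity limit of the reset density; the limit does
not depend on the initial velocity `v_j`. -/
theorem large_intensity_limit (v₁ v₂ xi : ℝ) (hxi : 0 < xi)
    (hv : v₂ < v₁) (hv1 : v₁ ≠ 0) (hv2 : v₂ ≠ 0)
    (hcase : (v₂ < 0 ∧ 0 < v₁) ∨ (0 < v₂ ∧ v₂ < v₁)) :
    ∀ j : ℕ, (j = 1 ∨ j = 2) → ∀ t : ℝ, 0 < t → ∀ x : ℝ,
      min (v₂ * t) 0 < x → x < v₁ * t → x ≠ 0 → x ≠ v₂ * t →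
      Tendsto (fun lam => pTil v₁ v₂ lam xi j x t) atTop
        (𝓝 (ind (v₂ * t < x ∧ x < v₁ * t) * Real.exp (-(xi * t)) / ((v₁ - v₂) * t)
          + ind (min (v₂ * t) 0 < x ∧ x < v₁ * t) * (xi / (v₁ - v₂)) *
              (if v₂ < 0 then iGamma (max (x / v₁) (x / v₂) * xi) (t * xi)
                else iGamma (x / v₁ * xi) (min (x / v₂) t * xi)))) := by
  intro j hj t ht x hx1 hx2 hx0 hxvt
  have hvv : v₁ - v₂ ≠ 0 := sub_ne_zero.mpr (ne_of_gt hv)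
  -- Term A : tends to 0
  have hA : Tendsto (fun lam : ℝ =>
      Real.sign (vel v₁ v₂ j) * ind (0 < x / vel v₁ v₂ j ∧ x / vel v₁ v₂ j < t) * xi *
        Real.exp (-(xi * (x / vel v₁ v₂ j))) / (vel v₁ v₂ j + lam * x)) atTop (𝓝 0) := by
    have hinv : Tendsto (fun lam : ℝ => (vel v₁ v₂ j + lam * x)⁻¹) atTop (𝓝 0) := by
      rcases hx0.lt_or_gt with hxn | hxp
      · have hbot : Tendsto (fun lam : ℝ => vel v₁ v₂ j + lam * x) atTop atBot :=
          tendsto_atBot_add_const_left _ _ (tendsto_id.atTop_mul_const_of_neg hxn)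
        have hneg : Tendsto (fun lam : ℝ => -(vel v₁ v₂ j + lam * x)) atTop atTop :=
          tendsto_neg_atBot_atTop.comp hbot
        have h2 := hneg.inv_tendsto_atTop
        have h3 := h2.neg
        have h4 : Tendsto (fun lam : ℝ => (vel v₁ v₂ j + lam * x)⁻¹) atTop (𝓝 (-0)) :=
          h3.congr (fun lam => by
            show -((fun l : ℝ => -(vel v₁ v₂ j + l * x)) lam)⁻¹ = _
            rw [inv_neg, neg_neg])
        simpa using h4
      · have htop : Tendsto (fun lam : ℝ => vel v₁ v₂ j + lam * x) atTop atTop :=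
          tendsto_atTop_add_const_left _ _ (tendsto_id.atTop_mul_const hxp)
        exact htop.inv_tendsto_atTop
    have := hinv.const_mul (Real.sign (vel v₁ v₂ j) *
      ind (0 < x / vel v₁ v₂ j ∧ x / vel v₁ v₂ j < t) * xi *
      Real.exp (-(xi * (x / vel v₁ v₂ j))))
    simpa [div_eq_mul_inv] using this
  -- Term B
  have hB : Tendsto (fun lam : ℝ =>
      ind (v₂ * t < x ∧ x < v₁ * t) * lam * Real.exp (-(xi * t)) /
        ((v₁ - v₂) * (1 + lam * t))) atTop
      (𝓝 (ind (v₂ * t < x ∧ x < v₁ * t) * Real.exp (-(xi * t)) / ((v₁ - v₂) * t))) := by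
    have hden : Tendsto (fun lam : ℝ => (v₁ - v₂) * (lam⁻¹ + t)) atTop
        (𝓝 ((v₁ - v₂) * t)) := by
      have h1 : Tendsto (fun lam : ℝ => lam⁻¹ + t) atTop (𝓝 (0 + t)) :=
        tendsto_inv_atTop_zero.add tendsto_const_nhds
      simpa using h1.const_mul (v₁ - v₂)
    have hmain : Tendsto (fun lam : ℝ =>
        ind (v₂ * t < x ∧ x < v₁ * t) * Real.exp (-(xi * t)) / ((v₁ - v₂) * (lam⁻¹ + t)))
        atTop (𝓝 (ind (v₂ * t < x ∧ x < v₁ * t) * Real.exp (-(xi * t)) / ((v₁ - v₂) * t))) :=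
      tendsto_const_nhds.div hden (mul_ne_zero hvv (ne_of_gt ht))
    refine Tendsto.congr' ?_ hmain
    filter_upwards [eventually_gt_atTop (0 : ℝ)] with lam hlam
    have h1 : (0 : ℝ) < 1 + lam * t := by positivity
    have h2 : lam⁻¹ + t ≠ 0 := by positivity
    field_simp
  -- exp (xi/lam) → 1
  have hexp : Tendsto (fun lam : ℝ => Real.exp (xi / lam)) atTop (𝓝 1) := by
    have h1 : Tendsto (fun lam : ℝ => xi / lam) atTop (𝓝 0) := by
      have := tendsto_inv_atTop_zero (𝕜 := ℝ).const_mul xi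
      simpa [div_eq_mul_inv] using tendsto_inv_atTop_zero.const_mul xi
    have h2 := (Real.continuous_exp.tendsto 0).comp h1
    simpa [Function.comp_def] using h2
  -- coefficient of the Gamma term
  have hcoef : Tendsto (fun lam : ℝ =>
      ind (min (v₂ * t) 0 < x ∧ x < v₁ * t) * (xi * Real.exp (xi / lam) / (v₁ - v₂)))
      atTop (𝓝 (ind (min (v₂ * t) 0 < x ∧ x < v₁ * t) * (xi / (v₁ - v₂)))) := by
    have := ((hexp.const_mul xi).div_const (v₁ - v₂)).const_mul
      (ind (min (v₂ * t) 0 < x ∧ x < v₁ * t))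
    simpa using this
  -- Term C
  have hC : Tendsto (fun lam : ℝ =>
      ind (min (v₂ * t) 0 < x ∧ x < v₁ * t) * (xi * Real.exp (xi / lam) / (v₁ - v₂)) *
        GamL v₁ v₂ lam xi x t) atTop
      (𝓝 (ind (min (v₂ * t) 0 < x ∧ x < v₁ * t) * (xi / (v₁ - v₂)) *
        (if v₂ < 0 then iGamma (max (x / v₁) (x / v₂) * xi) (t * xi)
          else iGamma (x / v₁ * xi) (min (x / v₂) t * xi)))) := by
    rcases hcase with ⟨hneg, hpos1⟩ | ⟨hpos2, _⟩
    · have ha : 0 < max (x / v₁) (x / v₂) := by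
        rcases hx0.lt_or_gt with hxn | hxp
        · exact lt_max_of_lt_right (div_pos_of_neg_of_neg hxn hneg)
        · exact lt_max_of_lt_left (div_pos hxp hpos1)
      have hGam : Tendsto (fun lam : ℝ => GamL v₁ v₂ lam xi x t) atTop
          (𝓝 (iGamma (max (x / v₁) (x / v₂) * xi) (t * xi))) := by
        have := iGamma_lim xi (max (x / v₁) (x / v₂)) t hxi ha ht
        simpa [GamL, if_pos hneg] using this
      simpa [if_pos hneg] using hcoef.mul hGam
    · have hnlt : ¬ v₂ < 0 := not_lt.mpr hpos2.le
      have hxp : 0 < x := by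
        have hm : min (v₂ * t) 0 = 0 := min_eq_right (mul_pos hpos2 ht).le
        rwa [hm] at hx1
      have hv1pos : 0 < v₁ := lt_trans hpos2 hv
      have ha : 0 < x / v₁ := div_pos hxp hv1pos
      have hb : 0 < min (x / v₂) t := lt_min (div_pos hxp hpos2) ht
      have hGam : Tendsto (fun lam : ℝ => GamL v₁ v₂ lam xi x t) atTop
          (𝓝 (iGamma (x / v₁ * xi) (min (x / v₂) t * xi))) := by
        have := iGamma_lim xi (x / v₁) (min (x / v₂) t) hxi ha hb
        simpa [GamL, if_neg hnlt] using this
      simpa [if_neg hnlt] using hcoef.mul hGam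
  have hsum := (hA.add hB).add hC
  rw [zero_add] at hsum
  exact hsum

end TelegraphReset
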